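/- Let q be a prime power, n a positive integer with gcd(q,n)=1, and θ a primitive n-th root of unity in an extension of F_q. If φ: F_q[X]/⟨X^n−1⟩ → F_q[X]/⟨X^n−1⟩ is an algebra automorphism that preserves Hamming weight, then there exist s ∈ Z with gcd(s,n)=1 and t ∈ Z with qt ≡ t (mod n) such that φ(a(X)) = a(θ^t X^s) (mod X^n−1) for all a(X). -/

import Mathlib

open Polynomial

/-- The Hamming weight of an element of `F[X]/⟨X^n − 1⟩`: the number of nonzero
coefficients of its unique representative of degree `< n`. -/
noncomputable def hammingWt {F : Type*} [Field F] {n : ℕ} (hn : n ≠ 0)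
    (x : AdjoinRoot (X ^ n - 1 : F[X])) : ℕ :=
  ((AdjoinRoot.modByMonicHom
    (by simpa using monic_X_pow_sub_C (1 : F) hn : (X ^ n - 1 : F[X]).Monic)) x).support.card

/-- every algebra automorphism of `F_q[X]/⟨X^n−1⟩` preserving the Hamming
weight has the form `a(X) ↦ a(θ^t X^s)` with `gcd(s,n) = 1` and `q·t ≡ t (mod n)`. -/
theorem stmt0 (F : Type*) [Field F] [Fintype F] (n : ℕ) (hn : 0 < n)
    (hcop : Nat.Coprime (Fintype.card F) n)
    (E : Type*) [Field E] [Algebra F E] (θ : E) (hθ : IsPrimitiveRoot θ n)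
    (φ : AdjoinRoot (X ^ n - 1 : F[X]) ≃ₐ[F] AdjoinRoot (X ^ n - 1 : F[X]))
    (hφ : ∀ x, hammingWt hn.ne' (φ x) = hammingWt hn.ne' x) :
    ∃ (s t : ℕ) (b : F), Nat.Coprime s n ∧
      Fintype.card F * t ≡ t [MOD n] ∧
      algebraMap F E b = θ ^ t ∧
      ∀ a : F[X], φ (AdjoinRoot.mk _ a) = AdjoinRoot.mk _ (a.comp (C b * X ^ s)) := by
  haveI : NeZero n := ⟨hn.ne'⟩
  have hmonic : (X ^ n - 1 : F[X]).Monic := by simpa using monic_X_pow_sub_C (1 : F) hn.ne'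
  have hfC' : (X ^ n - 1 : F[X]) = X ^ n - C 1 := by rw [map_one]
  have hdegf : (X ^ n - 1 : F[X]).natDegree = n := by rw [hfC', natDegree_X_pow_sub_C]
  have hdegf' : (X ^ n - 1 : F[X]).degree = n := by rw [hfC']; exact degree_X_pow_sub_C hn 1
  haveI : Nontrivial (AdjoinRoot (X ^ n - 1 : F[X])) := AdjoinRoot.nontrivial (X ^ n - 1 : F[X]) (by
    rw [hdegf']; exact_mod_cast hn.ne')
  set ξ : AdjoinRoot (X ^ n - 1 : F[X]) := AdjoinRoot.root (X ^ n - 1 : F[X]) with hξdef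
  have hξn : ξ ^ n = 1 := by
    have h0 : AdjoinRoot.mk (X ^ n - 1 : F[X]) (X ^ n - 1) = 0 := AdjoinRoot.mk_self
    rw [map_sub, map_pow, AdjoinRoot.mk_X, map_one, sub_eq_zero] at h0
    exact h0
  -- weight of mk X is 1
  have hwX : hammingWt hn.ne' (AdjoinRoot.mk (X ^ n - 1 : F[X]) X) = 1 := by
    unfold hammingWt
    rw [AdjoinRoot.modByMonicHom_mk]
    rcases eq_or_lt_of_le (show 1 ≤ n from hn) with h1 | h2
    · -- n = 1
      have : (X ^ n - 1 : F[X]) = X - C 1 := by rw [hfC', ← h1, pow_one]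
      rw [this, modByMonic_X_sub_C_eq_C_eval, eval_X, support_C (one_ne_zero),
        Finset.card_singleton]
    · -- 1 < n
      have : (X : F[X]) %ₘ (X ^ n - 1 : F[X]) = X := by
        apply (modByMonic_eq_self_iff hmonic).mpr
        rw [hfC', degree_X_pow_sub_C hn, degree_X]
        exact_mod_cast h2
      rw [this, support_X, Finset.card_singleton]
  set y := φ (AdjoinRoot.mk (X ^ n - 1 : F[X]) X) with hydef
  have hwy : ((AdjoinRoot.modByMonicHom hmonic) y).support.card = 1 := by
    have := hφ (AdjoinRoot.mk (X ^ n - 1 : F[X]) X)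
    rw [hwX] at this
    unfold hammingWt at this
    exact this
  obtain ⟨s, c, hc, hr⟩ := Polynomial.card_support_eq_one.mp hwy
  have hymk : y = AdjoinRoot.mk (X ^ n - 1 : F[X]) (C c * X ^ s) := by
    conv_lhs => rw [← AdjoinRoot.mk_leftInverse hmonic y, hr]
  have hyval : y = algebraMap F (AdjoinRoot (X ^ n - 1 : F[X])) c * ξ ^ s := by
    rw [hymk, map_mul, map_pow, AdjoinRoot.mk_X, AdjoinRoot.mk_C, hξdef]
    rfl
  -- s is coprime to n
  have hcop_s : Nat.Coprime s n := by
    by_contra hd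
    set d := Nat.gcd s n with hdd
    have hdn : d ∣ n := Nat.gcd_dvd_right s n
    have hds : d ∣ s := Nat.gcd_dvd_left s n
    have hd0 : 0 < d := Nat.gcd_pos_of_pos_right s hn
    have hdne : d ≠ 1 := fun h => hd h
    have hd1 : 1 < d := by omega
    set m := n / d with hmdef
    have hm_pos : 0 < m := Nat.div_pos (Nat.le_of_dvd hn hdn) hd0
    have hmn : m < n := Nat.div_lt_self hn hd1
    have hnm : d * m = n := Nat.mul_div_cancel' hdn
    have hsm : n ∣ s * m := by
      obtain ⟨k, hk⟩ := hds
      refine ⟨k, ?_⟩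
      calc s * m = d * k * m := by rw [hk]
        _ = n * k := by rw [← hnm]; ring
    have hym : y ^ m = algebraMap F (AdjoinRoot (X ^ n - 1 : F[X])) (c ^ m) := by
      obtain ⟨k, hk⟩ := hsm
      rw [hyval, mul_pow, ← pow_mul, hk, pow_mul, hξn, one_pow, mul_one, map_pow]
    set g : F[X] := X ^ m - C (c ^ m) with hgdef
    have hgy : aeval y g = 0 := by
      rw [hgdef, map_sub, aeval_X_pow, aeval_C, hym, sub_self]
    have hgξ : aeval ξ g = 0 := by
      have h1 : aeval (φ ξ) g = φ (aeval ξ g) := aeval_algHom_apply φ.toAlgHom ξ g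
      have h2 : φ ξ = y := by rw [hydef, AdjoinRoot.mk_X]
      rw [h2, hgy] at h1
      exact φ.injective (by rw [← h1, map_zero])
    rw [AdjoinRoot.aeval_eq, AdjoinRoot.mk_eq_zero] at hgξ
    have hgne : g ≠ 0 := (monic_X_pow_sub_C _ hm_pos.ne').ne_zero
    have hled := Polynomial.natDegree_le_of_dvd hgξ hgne
    rw [hdegf, hgdef, natDegree_X_pow_sub_C] at hled
    omega
  -- c ^ n = 1
  have hyn : y ^ n = 1 := by
    have hx : (AdjoinRoot.mk (X ^ n - 1 : F[X]) X) ^ n = 1 := hξn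
    rw [hydef, ← map_pow, hx, map_one]
  have hcn : c ^ n = 1 := by
    have h1 : algebraMap F (AdjoinRoot (X ^ n - 1 : F[X])) (c ^ n) = 1 := by
      rw [hyval] at hyn
      rw [map_pow]
      calc (algebraMap F (AdjoinRoot (X ^ n - 1 : F[X])) c) ^ n
          = (algebraMap F (AdjoinRoot (X ^ n - 1 : F[X])) c) ^ n * (ξ ^ s) ^ n := by
            rw [← pow_mul, mul_comm s n, pow_mul, hξn, one_pow, mul_one]

        _ = 1 := by rw [← mul_pow, hyn]
    have := (algebraMap F (AdjoinRoot (X ^ n - 1 : F[X]))).injective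
    rw [← map_one (algebraMap F (AdjoinRoot (X ^ n - 1 : F[X])))] at h1
    exact this h1
  -- find t
  have hbE : (algebraMap F E c) ^ n = 1 := by rw [← map_pow, hcn, map_one]
  obtain ⟨t, htn, htb⟩ := hθ.eq_pow_of_pow_eq_one hbE
  -- q t ≡ t mod n
  have hqt : Fintype.card F * t ≡ t [MOD n] := by
    have hcq : c ^ (Fintype.card F) = c := FiniteField.pow_card c
    have hθq : θ ^ (Fintype.card F * t) = θ ^ t := by
      rw [mul_comm (Fintype.card F) t, pow_mul, htb, ← map_pow, hcq, ← htb]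
    have hle : t ≤ Fintype.card F * t := Nat.le_mul_of_pos_left t Fintype.card_pos
    have hsub : θ ^ (Fintype.card F * t - t) = 1 := by
      have hθt : θ ^ t ≠ 0 := pow_ne_zero t (hθ.ne_zero hn.ne')
      have : θ ^ (Fintype.card F * t - t) * θ ^ t = 1 * θ ^ t := by
        rw [← pow_add, Nat.sub_add_cancel hle, hθq, one_mul]
      exact mul_right_cancel₀ hθt this
    have hdvd : n ∣ Fintype.card F * t - t := (hθ.pow_eq_one_iff_dvd _).mp hsub
    exact ((Nat.modEq_iff_dvd' hle).mpr hdvd).symm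
  refine ⟨s, t, c, hcop_s, hqt, htb.symm, ?_⟩
  intro a
  rw [← AdjoinRoot.aeval_eq, ← AdjoinRoot.aeval_eq, Polynomial.aeval_comp]
  have h1 : aeval (AdjoinRoot.root (X ^ n - 1 : F[X])) (C c * X ^ s) = y := by
    rw [map_mul, aeval_C, aeval_X_pow, hyval]
  rw [h1]
  have h2 : φ (AdjoinRoot.root (X ^ n - 1 : F[X])) = y := by rw [hydef, AdjoinRoot.mk_X]
  rw [← h2]
  exact (aeval_algHom_apply φ (AdjoinRoot.root (X ^ n - 1 : F[X])) a).symm
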